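/- For every point x ∈ ℝ¹³⁵ = (ℝ⁵)²⁷, there exist real numbers λ¹, …, λ²⁷, λ²⁸, λ²⁹ such that the Lagrange 1-form Σᵢ dEᵢ + Σᵢ λⁱ ωᵢ + λ²⁸ Σᵢ dGᵢ + λ²⁹ Σᵢ dQᵢ vanishes at x (as a linear functional on ℝ¹³⁵) if and only if I₁(x) = ⋯ = I₂₇(x) ≠ 0 and P₁(x) = ⋯ = P₂₇(x). -/

import Mathlib

/- The product economy ℝ¹³⁵ = (ℝ⁵)²⁷ is modeled as `Fin 27 → Fin 5 → ℝ`;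
   within each factor, index 0 = G, 1 = I, 2 = E, 3 = P, 4 = Q. -/

/-- Gibbs–Pfaff covector of the `i`-th economy at the point `x`:
`ωᵢ = dGᵢ − Iᵢ(x) dEᵢ + Pᵢ(x) dQᵢ`, a linear functional on ℝ¹³⁵. -/
noncomputable def ω (x : Fin 27 → Fin 5 → ℝ) (i : Fin 27) :
    (Fin 27 → Fin 5 → ℝ) → ℝ :=
  fun v => v i 0 - x i 1 * v i 2 + x i 3 * v i 4

/-- For every `x ∈ ℝ¹³⁵`, there exist multipliers `λ¹, …, λ²⁷, λ²⁸, λ²⁹` making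
the Lagrange 1-form `Σᵢ dEᵢ + Σᵢ λⁱ ωᵢ + λ²⁸ Σᵢ dGᵢ + λ²⁹ Σᵢ dQᵢ` vanish at `x`
if and only if `I₁(x) = ⋯ = I₂₇(x) ≠ 0` and `P₁(x) = ⋯ = P₂₇(x)`. -/
theorem eu_balance_total_entropy (x : Fin 27 → Fin 5 → ℝ) :
    (∃ (lam : Fin 27 → ℝ) (lam28 lam29 : ℝ), ∀ v : Fin 27 → Fin 5 → ℝ,
        (∑ i, v i 2) + (∑ i, lam i * ω x i v)
          + lam28 * (∑ i, v i 0) + lam29 * (∑ i, v i 4) = 0) ↔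
    ((∀ i j : Fin 27, x i 1 = x j 1) ∧ (∀ i : Fin 27, x i 1 ≠ 0) ∧
      (∀ i j : Fin 27, x i 3 = x j 3)) := by
  constructor
  · rintro ⟨lam, lam28, lam29, h⟩
    -- basis vectors
    have hE : ∀ i : Fin 27, 1 - lam i * x i 1 = 0 := by
      intro i
      have := h (fun j k => if j = i ∧ k = 2 then 1 else 0)
      simp [ω, Finset.sum_ite_eq', mul_ite] at this; linarith
    have hG : ∀ i : Fin 27, lam i + lam28 = 0 := by
      intro i
      have := h (fun j k => if j = i ∧ k = 0 then 1 else 0)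
      simpa [ω, Finset.sum_ite_eq', mul_ite] using this
    have hQ : ∀ i : Fin 27, lam i * x i 3 + lam29 = 0 := by
      intro i
      have := h (fun j k => if j = i ∧ k = 4 then 1 else 0)
      simpa [ω, Finset.sum_ite_eq', mul_ite] using this
    have hlamne : ∀ i : Fin 27, lam i ≠ 0 := by
      intro i hi
      have := hE i
      rw [hi] at this; simp at this
    have hlameq : ∀ i : Fin 27, lam i = -lam28 := by
      intro i; linarith [hG i]
    have hl28 : lam28 ≠ 0 := by
      intro h0
      exact hlamne 0 (by rw [hlameq 0, h0, neg_zero])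
    have hx1 : ∀ i : Fin 27, x i 1 = -1 / lam28 := by
      intro i
      have h1 := hE i
      rw [hlameq i] at h1
      field_simp at h1 ⊢
      linarith
    have hx3 : ∀ i : Fin 27, x i 3 = lam29 / lam28 := by
      intro i
      have h1 := hQ i
      rw [hlameq i] at h1
      field_simp
      linarith
    refine ⟨fun i j => by rw [hx1 i, hx1 j], fun i => ?_, fun i j => by rw [hx3 i, hx3 j]⟩
    rw [hx1 i]
    simp [hl28]
  · rintro ⟨h1, h2, h3⟩
    refine ⟨fun _ => 1 / x 0 1, -(1 / x 0 1), -(x 0 3 / x 0 1), fun v => ?_⟩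
    have hc : x 0 1 ≠ 0 := h2 0
    have e1 : ∀ i : Fin 27, x i 1 = x 0 1 := fun i => h1 i 0
    have e3 : ∀ i : Fin 27, x i 3 = x 0 3 := fun i => h3 i 0
    simp only [ω]
    have : ∀ i : Fin 27,
        (1 / x 0 1) * (v i 0 - x i 1 * v i 2 + x i 3 * v i 4)
          = (1 / x 0 1) * v i 0 - v i 2 + (x 0 3 / x 0 1) * v i 4 := by
      intro i
      rw [e1 i, e3 i]
      field_simp
    rw [Finset.sum_congr rfl (fun i _ => this i)]
    rw [Finset.sum_add_distrib, Finset.sum_sub_distrib, ← Finset.mul_sum, ← Finset.mul_sum]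
    ring
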